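/- The interval system 𝐀x = 𝐛, x ≥ 0 is strongly solvable if and only if for every sign vector s ∈ {±1}^m the real system (A_c + diag(s)A_Δ)x = b_c − diag(s)b_Δ, x ≥ 0 is solvable. -/

import Mathlib

open Finset

private lemma sum_mul_sub_right {m : ℕ} (u w v : Fin m → ℝ) (c : ℝ) :
    ∑ i, u i * (w i - c * v i) = (∑ i, u i * w i) - c * ∑ i, u i * v i := by
  rw [Finset.mul_sum, ← Finset.sum_sub_distrib]
  exact Finset.sum_congr rfl fun i _ => by ring

private lemma sum_sub_mul_left {m : ℕ} (u w v : Fin m → ℝ) (c : ℝ) :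
    ∑ i, (u i - c * v i) * w i = (∑ i, u i * w i) - c * ∑ i, v i * w i := by
  rw [Finset.mul_sum, ← Finset.sum_sub_distrib]
  exact Finset.sum_congr rfl fun i _ => by ring

/-- Farkas' lemma over `ℝ`, proved by induction on the number of generators. -/
private lemma farkas (m : ℕ) : ∀ (n : ℕ) (a : Fin n → Fin m → ℝ) (b : Fin m → ℝ),
    (∃ x : Fin n → ℝ, (∀ j, 0 ≤ x j) ∧ ∀ i, (∑ j, x j * a j i) = b i) ∨
    (∃ p : Fin m → ℝ, (∀ j, 0 ≤ ∑ i, a j i * p i) ∧ (∑ i, b i * p i) < 0) := by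
  intro n
  induction n with
  | zero =>
    intro a b
    by_cases hb : ∀ i, b i = 0
    · exact Or.inl ⟨fun _ => 0, fun _ => le_refl 0, fun i => by simp [hb i]⟩
    · right
      push_neg at hb
      obtain ⟨i0, hi0⟩ := hb
      refine ⟨fun i => -b i, fun j => Fin.elim0 j, ?_⟩
      have hpos : (0:ℝ) < ∑ i, b i * b i :=
        Finset.sum_pos' (fun i _ => mul_self_nonneg _)
          ⟨i0, mem_univ _, mul_self_pos.mpr hi0⟩
      have : ∑ i, b i * (-b i) = -∑ i, b i * b i := by
        simp [mul_neg]
      rw [this]; linarith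
  | succ n IH =>
    intro a b
    set a0 : Fin n → Fin m → ℝ := fun j => a j.castSucc with ha0
    set al : Fin m → ℝ := a (Fin.last n) with hal
    rcases IH a0 b with ⟨x, hx, hxe⟩ | ⟨p, hp, hbp⟩
    · left
      refine ⟨Fin.snoc x 0, ?_, ?_⟩
      · intro j
        refine Fin.lastCases ?_ ?_ j
        · simp
        · intro j; simpa using hx j
      · intro i
        rw [Fin.sum_univ_castSucc]
        simp only [Fin.snoc_castSucc, Fin.snoc_last]
        simpa using hxe i
    · set μ : ℝ := ∑ i, al i * p i with hμdef
      by_cases hμ : 0 ≤ μ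
      · right
        refine ⟨p, ?_, hbp⟩
        intro j
        refine Fin.lastCases ?_ ?_ j
        · exact hμ
        · exact hp
      · push_neg at hμ
        have hμ0 : μ ≠ 0 := ne_of_lt hμ
        set a' : Fin n → Fin m → ℝ :=
          fun j i => a0 j i - ((∑ k, a0 j k * p k) / μ) * al i with ha'
        set b' : Fin m → ℝ := fun i => b i - ((∑ k, b k * p k) / μ) * al i with hb'
        rcases IH a' b' with ⟨x, hx, hxe⟩ | ⟨q, hq, hbq⟩
        · left
          set t : ℝ := ((∑ k, b k * p k) - ∑ j, x j * ∑ k, a0 j k * p k) / μ with ht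
          have hnum : (∑ k, b k * p k) - (∑ j, x j * ∑ k, a0 j k * p k) < 0 := by
            have h1 : 0 ≤ ∑ j, x j * ∑ k, a0 j k * p k :=
              Finset.sum_nonneg fun j _ => mul_nonneg (hx j) (hp j)
            linarith
          have htpos : 0 < t := div_pos_of_neg_of_neg hnum hμ
          refine ⟨Fin.snoc x t, ?_, ?_⟩
          · intro j
            refine Fin.lastCases ?_ ?_ j
            · simpa using le_of_lt htpos
            · intro j; simpa using hx j
          · intro i
            rw [Fin.sum_univ_castSucc]
            simp only [Fin.snoc_castSucc, Fin.snoc_last]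
            have h1 := hxe i
            have h2 : ∑ j, x j * a' j i
                = (∑ j, x j * a0 j i) - (∑ j, x j * ((∑ k, a0 j k * p k) / μ)) * al i := by
              rw [ha']
              rw [Finset.sum_mul, ← Finset.sum_sub_distrib]
              exact Finset.sum_congr rfl fun j _ => by ring
            rw [h2, hb'] at h1
            have h3 : ∑ j, x j * ((∑ k, a0 j k * p k) / μ)
                = (∑ j, x j * ∑ k, a0 j k * p k) / μ := by
              rw [Finset.sum_div]
              exact Finset.sum_congr rfl fun j _ => by ring
            rw [h3] at h1
            have h4 : t = (∑ k, b k * p k) / μ - (∑ j, x j * ∑ k, a0 j k * p k) / μ := by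
              rw [ht, sub_div]
            have : (∑ j, x j * a0 j i) + t * al i = b i := by
              rw [h4]; linarith [h1]
            simpa [ha0] using this
        · right
          set ν : ℝ := ∑ i, al i * q i with hν
          refine ⟨fun i => q i - (ν / μ) * p i, ?_, ?_⟩
          · intro j
            refine Fin.lastCases ?_ ?_ j
            · show (0:ℝ) ≤ ∑ i, a (Fin.last n) i * (q i - (ν / μ) * p i)
              have : ∑ i, al i * (q i - (ν / μ) * p i) = ν - (ν / μ) * μ :=
                sum_mul_sub_right al q p (ν / μ)
              rw [← hal, this]
              field_simp; simp
            · intro j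
              show (0:ℝ) ≤ ∑ i, a j.castSucc i * (q i - (ν / μ) * p i)
              have h1 : ∑ i, a0 j i * (q i - (ν / μ) * p i)
                  = (∑ i, a0 j i * q i) - (ν / μ) * ∑ i, a0 j i * p i :=
                sum_mul_sub_right (a0 j) q p (ν / μ)
              have h2 : ∑ i, a' j i * q i
                  = (∑ i, a0 j i * q i) - ((∑ k, a0 j k * p k) / μ) * ∑ i, al i * q i :=
                sum_sub_mul_left (a0 j) q al ((∑ k, a0 j k * p k) / μ)
              have h3 : (ν / μ) * ∑ i, a0 j i * p i
                  = ((∑ k, a0 j k * p k) / μ) * ν := by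
                field_simp
              have := hq j
              rw [h2, ← hν] at this
              have : (0:ℝ) ≤ ∑ i, a0 j i * (q i - (ν / μ) * p i) := by
                rw [h1, h3]; linarith
              simpa [ha0] using this
          · have h1 : ∑ i, b i * (q i - (ν / μ) * p i)
                = (∑ i, b i * q i) - (ν / μ) * ∑ i, b i * p i :=
              sum_mul_sub_right b q p (ν / μ)
            have h2 : ∑ i, b' i * q i
                = (∑ i, b i * q i) - ((∑ k, b k * p k) / μ) * ∑ i, al i * q i :=
              sum_sub_mul_left b q al ((∑ k, b k * p k) / μ)
            have h3 : (ν / μ) * ∑ i, b i * p i = ((∑ k, b k * p k) / μ) * ν := by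
              field_simp
            rw [h2, ← hν] at hbq
            rw [h1, h3]; linarith

/-- `𝐀x = 𝐛, x ≥ 0` is strongly solvable iff for each sign vector `s` the system
`(A_c + diag(s)A_Δ)x = b_c − diag(s)b_Δ`, `x ≥ 0`, is solvable. -/
theorem strong_solvability_equations_nonneg_iff {m n : ℕ}
    (Ac AΔ : Matrix (Fin m) (Fin n) ℝ) (bc bΔ : Fin m → ℝ)
    (hAΔ : ∀ i j, 0 ≤ AΔ i j) (hbΔ : ∀ i, 0 ≤ bΔ i) :
    (∀ A : Matrix (Fin m) (Fin n) ℝ, (∀ i j, |A i j - Ac i j| ≤ AΔ i j) →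
     ∀ b : Fin m → ℝ, (∀ i, |b i - bc i| ≤ bΔ i) →
      ∃ x : Fin n → ℝ, A.mulVec x = b ∧ (∀ j, 0 ≤ x j))
    ↔
    (∀ s : Fin m → ℝ, (∀ i, s i = 1 ∨ s i = -1) →
      ∃ x : Fin n → ℝ, (∀ j, 0 ≤ x j) ∧
        (Ac + Matrix.diagonal s * AΔ).mulVec x = fun i => bc i - s i * bΔ i) := by
  constructor
  · intro H s hs
    have habs : ∀ i, |s i| = 1 := by
      intro i; rcases hs i with h | h <;> simp [h]
    obtain ⟨x, hxe, hx⟩ := H (Ac + Matrix.diagonal s * AΔ)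
      (fun i j => by
        simp only [Matrix.add_apply, Matrix.diagonal_mul, add_sub_cancel_left]
        rw [abs_mul, habs i, one_mul, abs_of_nonneg (hAΔ i j)])
      (fun i => bc i - s i * bΔ i)
      (fun i => by
        have : bc i - s i * bΔ i - bc i = -(s i * bΔ i) := by ring
        rw [this, abs_neg, abs_mul, habs i, one_mul, abs_of_nonneg (hbΔ i)])
    exact ⟨x, hx, hxe⟩
  · intro H A hA b hb
    rcases farkas m n (fun j i => A i j) b with ⟨x, hx, hxe⟩ | ⟨p, hp, hbp⟩
    · refine ⟨x, ?_, hx⟩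
      funext i
      rw [← hxe i]
      simp only [Matrix.mulVec, dotProduct]
      exact Finset.sum_congr rfl fun j _ => by ring
    · exfalso
      set s : Fin m → ℝ := fun i => if 0 ≤ p i then 1 else -1 with hsdef
      have hs : ∀ i, s i = 1 ∨ s i = -1 := by
        intro i; by_cases h : 0 ≤ p i <;> simp [hsdef, h]
      have hsp : ∀ i, s i * p i = |p i| := by
        intro i
        by_cases h : 0 ≤ p i
        · simp [hsdef, h, abs_of_nonneg h]
        · push_neg at h
          simp [hsdef, not_le.mpr h, abs_of_neg h]
      obtain ⟨x, hx, hxe⟩ := H s hs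
      have e1 : ∀ i, (Ac + Matrix.diagonal s * AΔ).mulVec x i
          = ∑ j, (Ac i j + s i * AΔ i j) * x j := by
        intro i
        simp only [Matrix.mulVec, dotProduct, Matrix.add_apply, Matrix.diagonal_mul]
      have main : (0:ℝ) ≤ ∑ i, (bc i - s i * bΔ i) * p i := by
        have key : ∑ i, (bc i - s i * bΔ i) * p i
            = ∑ j, x j * ∑ i, (Ac i j + s i * AΔ i j) * p i := by
          have step1 : ∀ i, (bc i - s i * bΔ i) * p i
              = ∑ j, (Ac i j + s i * AΔ i j) * x j * p i := by
            intro i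
            have := congrFun hxe i
            rw [e1 i] at this
            rw [← this, Finset.sum_mul]
          calc ∑ i, (bc i - s i * bΔ i) * p i
              = ∑ i, ∑ j, (Ac i j + s i * AΔ i j) * x j * p i :=
                Finset.sum_congr rfl fun i _ => step1 i
            _ = ∑ j, ∑ i, (Ac i j + s i * AΔ i j) * x j * p i := Finset.sum_comm
            _ = ∑ j, x j * ∑ i, (Ac i j + s i * AΔ i j) * p i := by
                refine Finset.sum_congr rfl fun j _ => ?_
                rw [Finset.mul_sum]
                exact Finset.sum_congr rfl fun i _ => by ring
        rw [key]
        refine Finset.sum_nonneg fun j _ => mul_nonneg (hx j) ?_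
        have hle : ∑ i, A i j * p i ≤ ∑ i, (Ac i j + s i * AΔ i j) * p i := by
          refine Finset.sum_le_sum fun i _ => ?_
          have h1 : (A i j - Ac i j) * p i ≤ AΔ i j * |p i| :=
            calc (A i j - Ac i j) * p i ≤ |(A i j - Ac i j) * p i| := le_abs_self _
              _ = |A i j - Ac i j| * |p i| := abs_mul _ _
              _ ≤ AΔ i j * |p i| :=
                  mul_le_mul_of_nonneg_right (hA i j) (abs_nonneg _)
          have h2 : (Ac i j + s i * AΔ i j) * p i = Ac i j * p i + AΔ i j * |p i| := by
            rw [← hsp i]; ring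
          linarith
        exact le_trans (hp j) hle
      have main2 : ∑ i, (bc i - s i * bΔ i) * p i ≤ ∑ i, b i * p i := by
        refine Finset.sum_le_sum fun i _ => ?_
        have h1 : |(b i - bc i) * p i| ≤ bΔ i * |p i| := by
          rw [abs_mul]
          exact mul_le_mul_of_nonneg_right (hb i) (abs_nonneg _)
        have h2 : -(bΔ i * |p i|) ≤ (b i - bc i) * p i := by
          have := neg_abs_le ((b i - bc i) * p i)
          linarith
        have h3 : (bc i - s i * bΔ i) * p i = bc i * p i - bΔ i * |p i| := by
          rw [← hsp i]; ring
        linarith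
      linarith
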